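/- The additive order of ε in the abelian group A_𝒯 is at least (q−1)/gcd(q−1, 3). -/

import Mathlib

/-- A triangle presentation compatible with the bijection `lam : P ≃ L`:
a set of triples satisfying conditions (i), (ii), (iii). -/
structure IsTrianglePresentation {P L : Type*} [Membership P L]
    (lam : P ≃ L) (T : Set (P × P × P)) : Prop where
  exists_iff : ∀ x y : P, (∃ z : P, (x, y, z) ∈ T) ↔ y ∈ lam x
  cyclic : ∀ x y z : P, (x, y, z) ∈ T → (y, z, x) ∈ T
  unique : ∀ x y z z' : P, (x, y, z) ∈ T → (x, y, z') ∈ T → z = z'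

open Classical in
/-- Relators of `A_𝒯`: generators are the points of `P` plus one extra generator
`ε` (encoded as `none : Option P`). -/
def triangleRels {P L : Type*} [Fintype P] [Membership P L]
    (lam : P ≃ L) (T : Set (P × P × P)) : Set (FreeAbelianGroup (Option P)) :=
  (Set.range fun x : P =>
      (∑ y ∈ Finset.univ.filter fun y : P => ¬ y ∈ lam x, FreeAbelianGroup.of (some y))
        - FreeAbelianGroup.of (some x)) ∪
  ((fun t : P × P × P =>
      FreeAbelianGroup.of (some t.1) + FreeAbelianGroup.of (some t.2.1)
        + FreeAbelianGroup.of (some t.2.2) - FreeAbelianGroup.of (none : Option P)) '' T) ∪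
  {(∑ x : P, FreeAbelianGroup.of (some x)) - FreeAbelianGroup.of (none : Option P)}

/-- The abelian group `A_𝒯`, presented by generators `P ∪ {ε}` and the relations above. -/
abbrev TriangleGroup {P L : Type*} [Fintype P] [Membership P L]
    (lam : P ≃ L) (T : Set (P × P × P)) : Type _ :=
  FreeAbelianGroup (Option P) ⧸ AddSubgroup.closure (triangleRels lam T)

/-- The image in `A_𝒯` of the generator corresponding to a point `x ∈ P`. -/
def triangleGen {P L : Type*} [Fintype P] [Membership P L]
    (lam : P ≃ L) (T : Set (P × P × P)) (x : P) : TriangleGroup lam T :=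
  QuotientAddGroup.mk (FreeAbelianGroup.of (some x))

/-- The image in `A_𝒯` of the generator `ε`. -/
def triangleEps {P L : Type*} [Fintype P] [Membership P L]
    (lam : P ≃ L) (T : Set (P × P × P)) : TriangleGroup lam T :=
  QuotientAddGroup.mk (FreeAbelianGroup.of (none : Option P))

set_option maxHeartbeats 1000000 in
open Classical in
theorem stmt5 {P L : Type*} [Fintype P] [Fintype L] [Membership P L]
    [Configuration.ProjectivePlane P L] (q : ℕ) (hq : 2 ≤ q)
    (horder : Configuration.ProjectivePlane.order P L = q)
    (lam : P ≃ L) (T : Set (P × P × P)) (hT : IsTrianglePresentation lam T) :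
    (q - 1) / Nat.gcd (q - 1) 3 ≤ addOrderOf (triangleEps lam T) := by
  set n : ℕ := q - 1 with hn
  have hn0 : n ≠ 0 := by omega
  have hq2 : q ^ 2 = q * q := sq q
  have hq4 : 4 ≤ q * q := Nat.mul_le_mul hq hq
  -- cardinality facts
  have hcardP : Fintype.card P = q ^ 2 + q + 1 := by
    rw [← horder]; exact Configuration.ProjectivePlane.card_points P L
  have hnotline : ∀ (l : L) (inst : DecidablePred fun y : P => ¬ y ∈ l),
      (@Finset.filter P (fun y : P => ¬ y ∈ l) inst Finset.univ).card = q ^ 2 := by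
    intro l inst
    have hi : inst = fun x => Classical.propDecidable _ := Subsingleton.elim _ _
    subst hi
    have h1 : (@Finset.filter P (fun y : P => y ∈ l)
        (fun x => Classical.propDecidable _) Finset.univ).card = q + 1 := by
      rw [← Fintype.card_subtype, ← Nat.card_eq_fintype_card]
      have h := Configuration.ProjectivePlane.pointCount_eq P l
      rw [horder] at h
      exact h
    have h := @Finset.card_filter_add_card_filter_not P Finset.univ
      (fun y : P => y ∈ l) (fun x => Classical.propDecidable _)
      (fun x => Classical.propDecidable _)
    rw [h1, Finset.card_univ, hcardP] at h
    omega
  have hthrough : ∀ (y : P) (inst : DecidablePred fun x : P => ¬ y ∈ lam x),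
      (@Finset.filter P (fun x : P => ¬ y ∈ lam x) inst Finset.univ).card = q ^ 2 := by
    intro y inst
    have hi : inst = fun x => Classical.propDecidable _ := Subsingleton.elim _ _
    subst hi
    have h1 : (@Finset.filter P (fun x : P => y ∈ lam x)
        (fun x => Classical.propDecidable _) Finset.univ).card = q + 1 := by
      rw [← Fintype.card_subtype]
      have e : {x : P // y ∈ lam x} ≃ {l : L // y ∈ l} :=
        Equiv.subtypeEquiv lam fun x => Iff.rfl
      rw [Fintype.card_congr e, ← Nat.card_eq_fintype_card]
      have h := Configuration.ProjectivePlane.lineCount_eq L y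
      rw [horder] at h
      exact h
    have h := @Finset.card_filter_add_card_filter_not P Finset.univ
      (fun x : P => y ∈ lam x) (fun x => Classical.propDecidable _)
      (fun x => Classical.propDecidable _)
    rw [h1, Finset.card_univ, hcardP] at h
    omega
  -- the homomorphism to ZMod n
  have hq1 : ((q : ZMod n) = 1) := by
    have hqe : q = n + 1 := by omega
    rw [hqe]; push_cast [ZMod.natCast_self]; ring
  set f : FreeAbelianGroup (Option P) →+ ZMod n :=
    FreeAbelianGroup.lift (fun o : Option P => o.elim (3 : ZMod n) (fun _ => 1)) with hf
  have hfs : ∀ x : P, f (FreeAbelianGroup.of (some x)) = 1 := fun x =>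
    FreeAbelianGroup.lift_apply_of _ _
  have hfn : f (FreeAbelianGroup.of (none : Option P)) = 3 :=
    FreeAbelianGroup.lift_apply_of _ _
  have hker : ∀ r ∈ triangleRels lam T, f r = 0 := by
    rintro r (⟨⟨x, rfl⟩ | ⟨t, ht, rfl⟩⟩ | rfl)
    · rw [map_sub, map_sum, hfs]
      simp only [hfs]
      rw [Finset.sum_const, hnotline (lam x), nsmul_eq_mul, mul_one]
      push_cast
      rw [hq1]
      ring
    · rw [map_sub, map_add, map_add, hfs, hfs, hfs, hfn]
      ring
    · rw [map_sub, map_sum, hfn]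
      simp only [hfs]
      rw [Finset.sum_const, Finset.card_univ, hcardP, nsmul_eq_mul, mul_one]
      push_cast
      rw [hq1]
      ring
  have hclos : AddSubgroup.closure (triangleRels lam T) ≤ f.ker :=
    (AddSubgroup.closure_le _).mpr hker
  set φ : TriangleGroup lam T →+ ZMod n :=
    QuotientAddGroup.lift _ f hclos with hφ
  have hφe : φ (triangleEps lam T) = 3 := hfn
  -- relations in the quotient
  set N := AddSubgroup.closure (triangleRels lam T) with hN
  set π : FreeAbelianGroup (Option P) →+ TriangleGroup lam T := QuotientAddGroup.mk' N with hπ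
  have hmk : ∀ r ∈ triangleRels lam T, π r = 0 := fun r hr =>
    (QuotientAddGroup.eq_zero_iff r).mpr (AddSubgroup.subset_closure hr)
  set g : P → TriangleGroup lam T := triangleGen lam T with hg
  set e : TriangleGroup lam T := triangleEps lam T with he
  have rel1 : ∀ (x : P) (inst : DecidablePred fun y : P => ¬ y ∈ lam x),
      ∑ y ∈ @Finset.filter P (fun y : P => ¬ y ∈ lam x) inst Finset.univ, g y = g x := by
    intro x inst
    have h := hmk _ (Or.inl (Or.inl ⟨x, rfl⟩))
    rw [map_sub, map_sum, sub_eq_zero] at h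
    convert h using 2
    congr!
    rfl
    rfl
  have rel3 : ∑ x : P, g x = e := by
    have h := hmk _ (Or.inr rfl)
    rw [map_sub, map_sum, sub_eq_zero] at h
    exact h
  -- the averaging argument: q² • e = e
  have hsq : (q ^ 2) • e = e := by
    have h1 : ∀ y : P, (q ^ 2) • g y =
        ∑ x ∈ Finset.univ.filter (fun x : P => ¬ y ∈ lam x), g y := fun y => by
      rw [Finset.sum_const, hthrough y]
    calc (q ^ 2) • e = ∑ y : P, (q ^ 2) • g y := by rw [← rel3, Finset.smul_sum]
      _ = ∑ y : P, ∑ x ∈ Finset.univ.filter (fun x : P => ¬ y ∈ lam x), g y :=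
          Finset.sum_congr rfl fun y _ => h1 y
      _ = ∑ y : P, ∑ x : P, if ¬ y ∈ lam x then g y else 0 :=
          Finset.sum_congr rfl fun y _ => Finset.sum_filter _ _
      _ = ∑ x : P, ∑ y : P, if ¬ y ∈ lam x then g y else 0 := Finset.sum_comm
      _ = ∑ x : P, ∑ y ∈ Finset.univ.filter (fun y : P => ¬ y ∈ lam x), g y :=
          Finset.sum_congr rfl fun x _ => (Finset.sum_filter _ _).symm
      _ = ∑ x : P, g x := Finset.sum_congr rfl fun x _ => rel1 x _
      _ = e := rel3
  have hfin : (q ^ 2 - 1) • e = 0 := by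
    have h1 : q ^ 2 - 1 + 1 = q ^ 2 := by omega
    have h2 : (q ^ 2 - 1 + 1) • e = (q ^ 2 - 1) • e + e := succ_nsmul e _
    rw [h1, hsq] at h2
    exact (add_eq_right.mp h2.symm)
  have hpos : 0 < addOrderOf e := by
    rw [addOrderOf_pos_iff]
    exact isOfFinAddOrder_iff_nsmul_eq_zero.mpr ⟨q ^ 2 - 1, by omega, hfin⟩
  have hdvd : addOrderOf (φ e) ∣ addOrderOf e := addOrderOf_map_dvd φ e
  have horder3 : addOrderOf (φ e) = n / Nat.gcd n 3 := by
    rw [hφe]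
    have h3 : (3 : ZMod n) = ((3 : ℕ) : ZMod n) := by push_cast; ring
    rw [h3, ZMod.addOrderOf_coe _ hn0]
  rw [← horder3]
  exact Nat.le_of_dvd hpos hdvd
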